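/- arXiv:2505.17000 — 4 statements merged into one kernel-verified Lean document; each statement's English description precedes it below -/
import Mathlib

section
/- Fix an integer d ≥ 2, an index 0 ≤ i ≤ d, a threshold u ∈ ℝ, and κ as below with κ'(1) > 1. Set ξ_∞ := κ'(1)(κ'(1)−1)/κ''(1). Then, as L → ∞, κ'(1)^{−Ld/2}·N_i(L,u) converges to (2√π / Γ((d+1)/2)) · (η_1(κ'(1)−1))^{−d/2} · ∫_u^∞ φ(x) (∫_{ℝ^d} Π(λ_{ξ_∞,x})·𝟙_{O_i}(λ_{ξ_∞,x})·f_{(1+η_1(1−κ'(1)))/2}(λ) dλ) dx. (High-disorder regime of Theorem 3.3.) -/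
open MeasureTheory Filter Real

/-- `K_d := 2^{d/2} ∏_{j=1}^d Γ(j/2)`. -/
noncomputable def Kd (d : ℕ) : ℝ :=
  2 ^ ((d : ℝ) / 2) * ∏ j ∈ Finset.Icc 1 d, Real.Gamma ((j : ℝ) / 2)

/-- `Π(λ) := ∏_{j=1}^d |λ_j|`. -/
noncomputable def PiAbs (d : ℕ) (lam : Fin d → ℝ) : ℝ := ∏ j, |lam j|

/-- `Δ(λ) := ∏_{1 ≤ h < k ≤ d} |λ_h − λ_k|`. -/
noncomputable def DeltaV (d : ℕ) (lam : Fin d → ℝ) : ℝ :=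
  ∏ h : Fin d, ∏ k : Fin d, if h < k then |lam h - lam k| else 1

/-- The density of the ordered eigenvalues of a GOI(c) matrix. -/
noncomputable def fGOI (d : ℕ) (c : ℝ) (lam : Fin d → ℝ) : ℝ :=
  (Kd d * Real.sqrt (1 + d * c))⁻¹ * DeltaV d lam *
    Real.exp (-(∑ j, lam j ^ 2) / 2 + c * (∑ j, lam j) ^ 2 / (2 * (1 + d * c))) *
    Set.indicator {x : Fin d → ℝ | Monotone x} (fun _ => 1) lam

/-- `O_i := {λ : λ_i < 0 < λ_{i+1}}` with conventions `λ_0 = −∞`, `λ_{d+1} = +∞`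
(one-based indexing; coordinates here are zero-based). -/
def Oi (d i : ℕ) : Set (Fin d → ℝ) :=
  {lam | (∀ j : Fin d, (j : ℕ) + 1 = i → lam j < 0) ∧ (∀ j : Fin d, (j : ℕ) = i → 0 < lam j)}

/-- `∫_{ℝ^d} Π(λ)·𝟙_{O_i}(λ)·f_c(λ) dλ`. -/
noncomputable def GOIint (d i : ℕ) (c : ℝ) : ℝ :=
  ∫ lam : Fin d → ℝ,
    PiAbs d lam * Set.indicator (Oi d i) (fun _ => 1) lam * fGOI d c lam

/-- `η_L := κ_L'(1)/κ_L''(1)` where `κ_L` is the `L`-fold iterate of `κ`. -/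
noncomputable def etaL (κ : ℝ → ℝ) (L : ℕ) : ℝ :=
  deriv (κ^[L]) 1 / deriv (deriv (κ^[L])) 1

/-- The Kac–Rice expression for the expected number of critical points of index `i`
of the depth-`L` limiting field on `S^d`. -/
noncomputable def Mcrit (d i : ℕ) (κ : ℝ → ℝ) (L : ℕ) : ℝ :=
  2 * Real.sqrt π / Real.Gamma (((d : ℝ) + 1) / 2) * etaL κ L ^ (-(d : ℝ) / 2) *
    GOIint d i ((1 + etaL κ L) / 2)

/-- `ξ_L := κ_L'(1)²/κ_L''(1)`. -/
noncomputable def xiL (κ : ℝ → ℝ) (L : ℕ) : ℝ :=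
  deriv (κ^[L]) 1 ^ 2 / deriv (deriv (κ^[L])) 1

/-- The standard Gaussian density. -/
noncomputable def stdPhi (x : ℝ) : ℝ := Real.exp (-x ^ 2 / 2) / Real.sqrt (2 * π)

/-- The standard Gaussian cumulative distribution function. -/
noncomputable def stdCDF (u : ℝ) : ℝ := ∫ x in Set.Iic u, stdPhi x

/-- `∫_u^∞ φ(x)·(∫_{ℝ^d} Π(λ_{ξ,x})·𝟙_{O_i}(λ_{ξ,x})·f_c(λ) dλ) dx`, where
`λ_{ξ,x}` has components `λ_j − ξ·x/√2`. -/
noncomputable def GOIintShift (d i : ℕ) (c ξ u : ℝ) : ℝ :=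
  ∫ x in Set.Ioi u, stdPhi x *
    ∫ lam : Fin d → ℝ,
      PiAbs d (fun j => lam j - ξ * x / Real.sqrt 2) *
        Set.indicator (Oi d i) (fun _ => 1) (fun j => lam j - ξ * x / Real.sqrt 2) *
        fGOI d c lam

/-- The Kac–Rice expression for the expected number of critical points of index `i`
above level `u` of the depth-`L` limiting field on `S^d`. -/
noncomputable def Ncrit (d i : ℕ) (κ : ℝ → ℝ) (u : ℝ) (L : ℕ) : ℝ :=
  2 * Real.sqrt π / Real.Gamma (((d : ℝ) + 1) / 2) * etaL κ L ^ (-(d : ℝ) / 2) *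
    GOIintShift d i ((1 + etaL κ L - xiL κ L) / 2) (xiL κ L) u



lemma int_abs_pow_gauss (n : ℕ) {b : ℝ} (hb : 0 < b) :
    Integrable (fun t : ℝ => |t| ^ n * Real.exp (-b * t ^ 2)) := by
  have h := (integrable_rpow_mul_exp_neg_mul_sq hb (s := (n:ℝ))
    (by exact_mod_cast neg_one_lt_zero.trans_le (by exact_mod_cast Nat.cast_nonneg n))).abs
  have : (fun t : ℝ => |t ^ ((n:ℝ):ℝ) * Real.exp (-b * t ^ 2)|)
      = fun t : ℝ => |t| ^ n * Real.exp (-b * t ^ 2) := by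
    funext t
    rw [abs_mul, abs_of_nonneg (Real.exp_nonneg _), Real.rpow_natCast, abs_pow]
  rwa [this] at h

lemma int_one_add_abs_pow_gauss (D : ℕ) {b : ℝ} (hb : 0 < b) :
    Integrable (fun t : ℝ => (1 + |t|) ^ D * Real.exp (-b * t ^ 2)) := by
  have heq : (fun t : ℝ => (1 + |t|) ^ D * Real.exp (-b * t ^ 2))
      = fun t => ∑ k ∈ Finset.range (D+1),
          (D.choose k : ℝ) * (|t| ^ k * Real.exp (-b * t ^ 2)) := by
    funext t
    rw [add_comm (1:ℝ), add_pow, Finset.sum_mul]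
    apply Finset.sum_congr rfl
    intro k _
    simp [mul_comm, mul_assoc, mul_left_comm]
  rw [heq]
  exact integrable_finset_sum _ fun k _ => (int_abs_pow_gauss k hb).const_mul _

lemma int_one_add_mul_abs_pow_gauss (D : ℕ) {a b : ℝ} (ha : 0 ≤ a) (hb : 0 < b) :
    Integrable (fun t : ℝ => (1 + a * |t|) ^ D * Real.exp (-b * t ^ 2)) := by
  apply Integrable.mono' (((int_one_add_abs_pow_gauss D hb).const_mul ((1+a)^D)))
  · apply Continuous.aestronglyMeasurable
    have : Continuous fun t : ℝ => (1 + a * |t|) ^ D :=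
      (continuous_const.add (continuous_const.mul continuous_abs)).pow D
    exact this.mul (Real.continuous_exp.comp (by continuity))
  · apply ae_of_all
    intro t
    rw [Real.norm_eq_abs, abs_of_nonneg (by positivity)]
    rw [mul_comm ((1+a)^D), mul_assoc, mul_comm (Real.exp _), ← mul_assoc, ← mul_pow]
    apply mul_le_mul_of_nonneg_right _ (Real.exp_nonneg _)
    apply pow_le_pow_left₀ (by positivity)
    nlinarith [abs_nonneg t]

section Analysis
variable (d i : ℕ)

lemma Kd_pos : 0 < Kd d := by
  unfold Kd
  apply mul_pos (Real.rpow_pos_of_pos two_pos _)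
  exact Finset.prod_pos fun j hj => Real.Gamma_pos_of_pos (by
    have : 1 ≤ j := (Finset.mem_Icc.mp hj).1
    positivity)

lemma PiAbs_nonneg (lam : Fin d → ℝ) : 0 ≤ PiAbs d lam :=
  Finset.prod_nonneg fun _ _ => abs_nonneg _

lemma DeltaV_nonneg (lam : Fin d → ℝ) : 0 ≤ DeltaV d lam :=
  Finset.prod_nonneg fun _ _ => Finset.prod_nonneg fun _ _ => by
    split_ifs <;> simp [abs_nonneg]

lemma indicator_nonneg' (S : Set (Fin d → ℝ)) (v : Fin d → ℝ) :
    0 ≤ Set.indicator S (fun _ => (1:ℝ)) v := by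
  apply Set.indicator_nonneg; intros; norm_num

lemma indicator_le_one' (S : Set (Fin d → ℝ)) (v : Fin d → ℝ) :
    Set.indicator S (fun _ => (1:ℝ)) v ≤ 1 := by
  apply Set.indicator_le' <;> intros <;> norm_num

lemma fGOI_nonneg (c : ℝ) (lam : Fin d → ℝ) : 0 ≤ fGOI d c lam := by
  unfold fGOI
  have h1 : 0 ≤ (Kd d * Real.sqrt (1 + d * c))⁻¹ :=
    inv_nonneg.mpr (mul_nonneg (Kd_pos d).le (Real.sqrt_nonneg _))
  exact mul_nonneg (mul_nonneg (mul_nonneg h1 (DeltaV_nonneg d lam)) (Real.exp_nonneg _))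
    (indicator_nonneg' d _ lam)

/-- the master dominating function -/
noncomputable def Mb (d : ℕ) (c : ℝ) (lam : Fin d → ℝ) : ℝ :=
  ∏ j, ((1 + |lam j|) ^ (2*d+1) * Real.exp (-(2*(1+(d:ℝ)*c))⁻¹ * lam j ^ 2))

lemma Mb_eq (c : ℝ) (lam : Fin d → ℝ) :
    Mb d c lam = (∏ j, (1 + |lam j|)) ^ (2*d+1) *
      Real.exp (-(2*(1+(d:ℝ)*c))⁻¹ * ∑ j, lam j ^ 2) := by
  unfold Mb
  rw [Finset.prod_mul_distrib, Finset.prod_pow, ← Real.exp_sum]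
  congr 1
  rw [Finset.mul_sum]

lemma Mb_nonneg (c : ℝ) (lam : Fin d → ℝ) : 0 ≤ Mb d c lam :=
  Finset.prod_nonneg fun _ _ => by positivity

lemma Mb_integrable {c : ℝ} (hc : 0 ≤ c) : Integrable (Mb d c) := by
  have hb : (0:ℝ) < (2*(1+(d:ℝ)*c))⁻¹ := by positivity
  exact MeasureTheory.Integrable.fintype_prod
    (f := fun _ : Fin d => fun t : ℝ => (1 + |t|) ^ (2*d+1) *
      Real.exp (-(2*(1+(d:ℝ)*c))⁻¹ * t ^ 2))
    (fun _ => int_one_add_abs_pow_gauss (2*d+1) hb)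

lemma fGOI_le {c : ℝ} (hc : 0 ≤ c) (lam : Fin d → ℝ) :
    fGOI d c lam ≤ (Kd d)⁻¹ *
      ((∏ j, (1 + |lam j|)) ^ (2*d) *
        Real.exp (-(2*(1+(d:ℝ)*c))⁻¹ * ∑ j, lam j ^ 2)) := by
  have hKd := Kd_pos d
  have hT : (0:ℝ) < 1 + (d:ℝ)*c := by positivity
  have hA : (Kd d * Real.sqrt (1 + d * c))⁻¹ ≤ (Kd d)⁻¹ := by
    apply inv_anti₀ hKd
    apply le_mul_of_one_le_right hKd.le
    exact Real.one_le_sqrt.mpr (by nlinarith [mul_nonneg (Nat.cast_nonneg d : (0:ℝ) ≤ (d:ℝ)) hc])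
  have hD : DeltaV d lam ≤ (∏ j, (1 + |lam j|)) ^ (2*d) := by
    have step1 : DeltaV d lam ≤ ∏ h : Fin d, ∏ k : Fin d, ((1+|lam h|)*(1+|lam k|)) := by
      unfold DeltaV
      apply Finset.prod_le_prod
      · intro h _; exact Finset.prod_nonneg fun k _ => by split_ifs <;> positivity
      · intro h _
        apply Finset.prod_le_prod
        · intro k _; split_ifs <;> positivity
        · intro k _
          split_ifs
          · have h1 : |lam h - lam k| ≤ |lam h| + |lam k| := abs_sub _ _
            nlinarith [abs_nonneg (lam h), abs_nonneg (lam k)]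
          · nlinarith [abs_nonneg (lam h), abs_nonneg (lam k)]
    have step2 : ∏ h : Fin d, ∏ k : Fin d, ((1+|lam h|)*(1+|lam k|))
        = (∏ j, (1 + |lam j|)) ^ (2*d) := by
      have inner : ∀ h : Fin d, ∏ k : Fin d, ((1+|lam h|)*(1+|lam k|))
          = (1+|lam h|)^d * ∏ k, (1+|lam k|) := by
        intro h
        rw [Finset.prod_mul_distrib, Finset.prod_const, Finset.card_univ, Fintype.card_fin]
      calc ∏ h : Fin d, ∏ k : Fin d, ((1+|lam h|)*(1+|lam k|))
          = ∏ h : Fin d, ((1+|lam h|)^d * ∏ k, (1+|lam k|)) := Finset.prod_congr rfl (fun h _ => inner h)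
        _ = (∏ h, (1+|lam h|)^d) * (∏ k, (1+|lam k|))^d := by
            rw [Finset.prod_mul_distrib, Finset.prod_const, Finset.card_univ, Fintype.card_fin]
        _ = (∏ j, (1 + |lam j|)) ^ (2*d) := by
            rw [Finset.prod_pow, two_mul, pow_add]
    exact le_trans step1 (le_of_eq step2)
  have hE : Real.exp (-(∑ j, lam j ^ 2) / 2 + c * (∑ j, lam j) ^ 2 / (2 * (1 + d * c)))
      ≤ Real.exp (-(2*(1+(d:ℝ)*c))⁻¹ * ∑ j, lam j ^ 2) := by
    apply Real.exp_le_exp.mpr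
    have hS : (∑ j, lam j) ^ 2 ≤ (d:ℝ) * ∑ j, lam j ^ 2 := by
      have := sq_sum_le_card_mul_sum_sq (s := (Finset.univ : Finset (Fin d))) (f := lam)
      simpa [Finset.card_univ, Fintype.card_fin] using this
    have hQ : (0:ℝ) ≤ ∑ j, lam j ^ 2 := Finset.sum_nonneg fun _ _ => sq_nonneg _
    have key : c * (∑ j, lam j) ^ 2 ≤ c * ((d:ℝ) * ∑ j, lam j ^ 2) :=
      mul_le_mul_of_nonneg_left hS hc
    have h2T : (0:ℝ) < 2*(1+(d:ℝ)*c) := by positivity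
    have hdiff : (-(2*(1+(d:ℝ)*c))⁻¹ * ∑ j, lam j ^ 2)
        - (-(∑ j, lam j ^ 2) / 2 + c * (∑ j, lam j) ^ 2 / (2 * (1 + d * c)))
        = (c * ((d:ℝ) * ∑ j, lam j ^ 2) - c * (∑ j, lam j) ^ 2) / (2*(1+(d:ℝ)*c)) := by
      field_simp
      ring
    linarith [div_nonneg (sub_nonneg.mpr key) h2T.le, hdiff]
  calc fGOI d c lam
      ≤ ((Kd d)⁻¹ * ((∏ j, (1 + |lam j|)) ^ (2*d)) *
          Real.exp (-(2*(1+(d:ℝ)*c))⁻¹ * ∑ j, lam j ^ 2)) * 1 := by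
        unfold fGOI
        apply mul_le_mul _ (indicator_le_one' d _ lam) (indicator_nonneg' d _ lam)
          (by positivity)
        apply mul_le_mul _ hE (Real.exp_nonneg _) (by positivity)
        exact mul_le_mul hA hD (DeltaV_nonneg d lam) (by positivity)
    _ = (Kd d)⁻¹ * ((∏ j, (1 + |lam j|)) ^ (2*d) *
          Real.exp (-(2*(1+(d:ℝ)*c))⁻¹ * ∑ j, lam j ^ 2)) := by ring

lemma PiAbs_shift_le (s : ℝ) (lam : Fin d → ℝ) :
    PiAbs d (fun j => lam j - s) ≤ (1+|s|)^d * ∏ j, (1 + |lam j|) := by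
  unfold PiAbs
  calc ∏ j, |lam j - s| ≤ ∏ j, ((1+|s|) * (1+|lam j|)) := by
        apply Finset.prod_le_prod (fun _ _ => abs_nonneg _)
        intro j _
        have h1 : |lam j - s| ≤ |lam j| + |s| := abs_sub _ _
        nlinarith [abs_nonneg (lam j), abs_nonneg s]
    _ = (1+|s|)^d * ∏ j, (1 + |lam j|) := by
        rw [Finset.prod_mul_distrib, Finset.prod_const, Finset.card_univ, Fintype.card_fin]

lemma integrand_le {c : ℝ} (hc : 0 ≤ c) (s : ℝ) (lam : Fin d → ℝ) :
    PiAbs d (fun j => lam j - s) *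
      Set.indicator (Oi d i) (fun _ => 1) (fun j => lam j - s) * fGOI d c lam
    ≤ (Kd d)⁻¹ * (1+|s|)^d * Mb d c lam := by
  have h1 := PiAbs_shift_le d s lam
  have h2 := fGOI_le d hc lam
  have hP : (0:ℝ) ≤ ∏ j, (1 + |lam j|) := Finset.prod_nonneg fun _ _ => by positivity
  calc PiAbs d (fun j => lam j - s) *
      Set.indicator (Oi d i) (fun _ => 1) (fun j => lam j - s) * fGOI d c lam
      ≤ (((1+|s|)^d * ∏ j, (1 + |lam j|)) * 1) *
        ((Kd d)⁻¹ * ((∏ j, (1 + |lam j|)) ^ (2*d) *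
          Real.exp (-(2*(1+(d:ℝ)*c))⁻¹ * ∑ j, lam j ^ 2))) := by
        apply mul_le_mul _ h2 (fGOI_nonneg d c lam) (by positivity)
        apply mul_le_mul h1 (indicator_le_one' d _ _) (indicator_nonneg' d _ _)
          (by positivity)
    _ = (Kd d)⁻¹ * (1+|s|)^d * Mb d c lam := by
        rw [Mb_eq]
        ring

lemma integrand_nonneg (c s : ℝ) (lam : Fin d → ℝ) :
    0 ≤ PiAbs d (fun j => lam j - s) *
      Set.indicator (Oi d i) (fun _ => 1) (fun j => lam j - s) * fGOI d c lam :=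
  mul_nonneg (mul_nonneg (PiAbs_nonneg d _) (indicator_nonneg' d _ _)) (fGOI_nonneg d c _)

lemma isOpen_Oi : IsOpen (Oi d i) := by
  have : Oi d i = ⋂ j : Fin d,
      ({lam : Fin d → ℝ | (j:ℕ)+1 = i → lam j < 0} ∩ {lam | (j:ℕ) = i → 0 < lam j}) := by
    ext lam
    simp only [Oi, Set.mem_setOf_eq, Set.mem_iInter, Set.mem_inter_iff]
    exact ⟨fun ⟨h1, h2⟩ j => ⟨h1 j, h2 j⟩, fun h => ⟨fun j => (h j).1, fun j => (h j).2⟩⟩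
  rw [this]
  apply isOpen_iInter_of_finite
  intro j
  apply IsOpen.inter
  · by_cases h : (j:ℕ)+1 = i
    · have : {lam : Fin d → ℝ | (j:ℕ)+1 = i → lam j < 0} = {lam | lam j < 0} := by
        ext; simp [h]
      rw [this]; exact isOpen_lt (continuous_apply j) continuous_const
    · have : {lam : Fin d → ℝ | (j:ℕ)+1 = i → lam j < 0} = Set.univ := by
        ext; simp [h]
      rw [this]; exact isOpen_univ
  · by_cases h : (j:ℕ) = i
    · have : {lam : Fin d → ℝ | (j:ℕ) = i → 0 < lam j} = {lam | 0 < lam j} := by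
        ext; simp [h]
      rw [this]; exact isOpen_lt continuous_const (continuous_apply j)
    · have : {lam : Fin d → ℝ | (j:ℕ) = i → 0 < lam j} = Set.univ := by
        ext; simp [h]
      rw [this]; exact isOpen_univ

lemma null_eval (j : Fin d) (a : ℝ) : volume {lam : Fin d → ℝ | lam j = a} = 0 := by
  have : {lam : Fin d → ℝ | lam j = a} =
      Set.pi Set.univ (fun k => if k = j then {a} else Set.univ) := by
    ext lam
    simp only [Set.mem_setOf_eq, Set.mem_pi, Set.mem_univ, forall_true_left]
    constructor
    · intro h k; split_ifs with hk
      · subst hk; simpa using h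
      · trivial
    · intro h; have := h j; simpa using this
  rw [this, volume_pi_pi]
  exact Finset.prod_eq_zero (Finset.mem_univ j) (by simp)

lemma ae_ne_eval (a : ℝ) : ∀ᵐ lam : Fin d → ℝ, ∀ j : Fin d, lam j ≠ a := by
  have h0 : volume (⋃ j : Fin d, {lam : Fin d → ℝ | lam j = a}) = 0 :=
    measure_iUnion_null fun j => null_eval d j a
  rw [ae_iff]
  refine measure_mono_null ?_ h0
  intro lam hlam
  simp only [Set.mem_setOf_eq, not_forall, not_not] at hlam
  obtain ⟨j, hj⟩ := hlam
  exact Set.mem_iUnion.mpr ⟨j, hj⟩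


lemma continuous_PiAbs : Continuous (PiAbs d) := by
  unfold PiAbs
  exact continuous_finset_prod _ fun j _ => (continuous_apply j).abs

lemma continuous_DeltaV : Continuous (DeltaV d) := by
  unfold DeltaV
  apply continuous_finset_prod _ fun h _ => ?_
  apply continuous_finset_prod _ fun k _ => ?_
  split_ifs
  · exact ((continuous_apply h).sub (continuous_apply k)).abs
  · exact continuous_const

lemma measurableSet_mono : MeasurableSet {x : Fin d → ℝ | Monotone x} := by
  have : {x : Fin d → ℝ | Monotone x} =
      ⋂ (a : Fin d), ⋂ (b : Fin d), {x : Fin d → ℝ | a ≤ b → x a ≤ x b} := by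
    ext x
    simp only [Set.mem_setOf_eq, Set.mem_iInter, Monotone]
  rw [this]
  apply MeasurableSet.iInter fun a => MeasurableSet.iInter fun b => ?_
  by_cases h : a ≤ b
  · have : {x : Fin d → ℝ | a ≤ b → x a ≤ x b} = {x | x a ≤ x b} := by ext; simp [h]
    rw [this]
    exact (isClosed_le (continuous_apply a) (continuous_apply b)).measurableSet
  · have : {x : Fin d → ℝ | a ≤ b → x a ≤ x b} = Set.univ := by ext; simp [h]
    rw [this]
    exact MeasurableSet.univ

lemma measurable_fGOI (c : ℝ) : Measurable (fGOI d c) := by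
  unfold fGOI
  have h1 : Continuous (fun lam : Fin d → ℝ =>
      (Kd d * Real.sqrt (1 + d * c))⁻¹ * DeltaV d lam *
        Real.exp (-(∑ j, lam j ^ 2) / 2 + c * (∑ j, lam j) ^ 2 / (2 * (1 + d * c)))) := by
    apply Continuous.mul (continuous_const.mul (continuous_DeltaV d))
    apply Real.continuous_exp.comp
    apply Continuous.add
    · exact ((continuous_finset_sum _ fun j _ => (continuous_apply j).pow 2).neg).div_const _
    · exact (continuous_const.mul ((continuous_finset_sum _ fun j _ =>
        continuous_apply j).pow 2)).div_const _
  exact h1.measurable.mul (measurable_const.indicator (measurableSet_mono d))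

lemma measurable_shift (s : ℝ) :
    Measurable (fun lam : Fin d → ℝ => (fun j => lam j - s)) :=
  measurable_pi_lambda _ fun j => (measurable_pi_apply j).sub measurable_const

lemma integrand_aesm (c s : ℝ) :
    AEStronglyMeasurable (fun lam : Fin d → ℝ =>
      PiAbs d (fun j => lam j - s) *
        Set.indicator (Oi d i) (fun _ => 1) (fun j => lam j - s) * fGOI d c lam)
      volume := by
  apply Measurable.aestronglyMeasurable
  exact (((continuous_PiAbs d).measurable.comp (measurable_shift d s)).mul
    ((measurable_const.indicator (isOpen_Oi d i).measurableSet).comp (measurable_shift d s))).mul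
    (measurable_fGOI d c)

/-- inner integral as a function of the shift -/
noncomputable def Jfun (d i : ℕ) (c s : ℝ) : ℝ :=
  ∫ lam : Fin d → ℝ,
    PiAbs d (fun j => lam j - s) *
      Set.indicator (Oi d i) (fun _ => 1) (fun j => lam j - s) * fGOI d c lam

lemma GOIintShift_eq_Jfun (c xi u : ℝ) :
    GOIintShift d i c xi u =
      ∫ x in Set.Ioi u, stdPhi x * Jfun d i c (xi * x / Real.sqrt 2) := rfl

lemma tendsto_indicator_Oi {s₀ : ℝ} {lam : Fin d → ℝ} (hlam : ∀ j, lam j ≠ s₀) :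
    Tendsto (fun s => Set.indicator (Oi d i) (fun _ => (1:ℝ)) (fun j => lam j - s)) (nhds s₀)
      (nhds (Set.indicator (Oi d i) (fun _ => (1:ℝ)) (fun j => lam j - s₀))) := by
  have hT : Tendsto (fun s => (fun j => lam j - s)) (nhds s₀)
      (nhds (fun j => lam j - s₀)) := by
    apply tendsto_pi_nhds.mpr
    intro j
    exact tendsto_const_nhds.sub tendsto_id
  by_cases hmem : (fun j => lam j - s₀) ∈ Oi d i
  · rw [Set.indicator_of_mem hmem]
    have hev : ∀ᶠ s in nhds s₀, (fun j => lam j - s) ∈ Oi d i :=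
      hT.eventually ((isOpen_Oi d i).eventually_mem hmem)
    apply Tendsto.congr' (hev.mono fun s hs => (Set.indicator_of_mem hs _).symm)
      tendsto_const_nhds
  · rw [Set.indicator_of_notMem hmem]
    have hev : ∀ᶠ s in nhds s₀, (fun j => lam j - s) ∉ Oi d i := by
      simp only [Oi, Set.mem_setOf_eq, not_and_or, not_forall] at hmem
      rcases hmem with ⟨j, hj, hge⟩ | ⟨j, hj, hle⟩
      · push_neg at hge
        have hpos : 0 < lam j - s₀ :=
          lt_of_le_of_ne hge (Ne.symm (sub_ne_zero.mpr (hlam j)))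
        have hev2 : ∀ᶠ s in nhds s₀, 0 < lam j - s :=
          ((continuous_const.sub continuous_id).tendsto s₀).eventually
            (eventually_gt_nhds hpos)
        refine hev2.mono fun s hs hOi => ?_
        have h' : lam j - s < 0 := hOi.1 j hj
        linarith
      · push_neg at hle
        have hneg : lam j - s₀ < 0 :=
          lt_of_le_of_ne hle (sub_ne_zero.mpr (hlam j))
        have hev2 : ∀ᶠ s in nhds s₀, lam j - s < 0 :=
          ((continuous_const.sub continuous_id).tendsto s₀).eventually
            (eventually_lt_nhds hneg)
        refine hev2.mono fun s hs hOi => ?_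
        have h' : 0 < lam j - s := hOi.2 j hj
        linarith
    apply Tendsto.congr' (hev.mono fun s hs => (Set.indicator_of_notMem hs _).symm)
      tendsto_const_nhds

lemma Jfun_continuous {c : ℝ} (hc : 0 ≤ c) : Continuous (Jfun d i c) := by
  rw [continuous_iff_continuousAt]
  intro s₀
  have hball : Metric.ball s₀ 1 ∈ nhds s₀ := Metric.ball_mem_nhds s₀ one_pos
  apply MeasureTheory.tendsto_integral_filter_of_dominated_convergence
    (bound := fun lam => (Kd d)⁻¹ * (2 + |s₀|)^d * Mb d c lam)
  · exact Eventually.of_forall fun s => integrand_aesm d i c s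
  · filter_upwards [hball] with s hs
    apply ae_of_all
    intro lam
    rw [Real.norm_eq_abs, abs_of_nonneg (integrand_nonneg d i c s lam)]
    refine le_trans (integrand_le d i hc s lam) ?_
    have h1 : (1:ℝ) + |s| ≤ 2 + |s₀| := by
      have := abs_sub_abs_le_abs_sub s s₀
      rw [Metric.mem_ball, Real.dist_eq] at hs
      linarith
    apply mul_le_mul_of_nonneg_right _ (Mb_nonneg d c lam)
    apply mul_le_mul_of_nonneg_left _ (inv_nonneg.mpr (Kd_pos d).le)
    exact pow_le_pow_left₀ (by positivity) h1 d
  · exact (Mb_integrable d hc).const_mul _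
  · filter_upwards [ae_ne_eval d s₀] with lam hlam
    apply Tendsto.mul _ tendsto_const_nhds
    apply Tendsto.mul _ (tendsto_indicator_Oi d i hlam)
    have : Continuous fun s : ℝ => PiAbs d (fun j => lam j - s) :=
      (continuous_PiAbs d).comp (by
        apply continuous_pi
        intro j
        exact continuous_const.sub continuous_id)
    exact this.tendsto s₀

lemma Jfun_bound {c : ℝ} (hc : 0 ≤ c) (s : ℝ) :
    |Jfun d i c s| ≤ ((Kd d)⁻¹ * (∫ lam, Mb d c lam)) * (1 + |s|)^d := by
  have h := MeasureTheory.norm_integral_le_of_norm_le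
    (((Mb_integrable d hc).const_mul ((Kd d)⁻¹ * (1+|s|)^d)))
    (ae_of_all _ fun lam => by
      rw [Real.norm_eq_abs, abs_of_nonneg (integrand_nonneg d i c s lam)]
      exact integrand_le d i hc s lam)
  rw [MeasureTheory.integral_const_mul] at h
  rw [show ((Kd d)⁻¹ * (∫ lam, Mb d c lam)) * (1 + |s|)^d
    = (Kd d)⁻¹ * (1+|s|)^d * ∫ lam, Mb d c lam from by ring]
  exact h

lemma outer_tendsto {c : ℝ} (hc : 0 ≤ c) (u : ℝ) {xin : ℕ → ℝ} {xi0 : ℝ}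
    (hxi : Tendsto xin atTop (nhds xi0)) :
    Tendsto (fun n => GOIintShift d i c (xin n) u) atTop
      (nhds (GOIintShift d i c xi0 u)) := by
  simp only [GOIintShift_eq_Jfun]
  set IM := ∫ lam, Mb d c lam with hIM
  set Xi := |xi0| + 1 with hXi
  have hXipos : 0 ≤ Xi := by positivity
  have hstd : ∀ x : ℝ, 0 ≤ stdPhi x := fun x => by
    unfold stdPhi; positivity
  apply MeasureTheory.tendsto_integral_filter_of_dominated_convergence
    (bound := fun x => stdPhi x * (((Kd d)⁻¹ * IM) * (1 + (Xi / Real.sqrt 2) * |x|)^d))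
  · apply Eventually.of_forall
    intro n
    apply Continuous.aestronglyMeasurable
    apply Continuous.mul (by unfold stdPhi; fun_prop)
    exact (Jfun_continuous d i hc).comp (by fun_prop)
  · have hev : ∀ᶠ n in atTop, |xin n| ≤ Xi := by
      have habs : Tendsto (fun n => |xin n|) atTop (nhds |xi0|) := hxi.abs
      exact (habs.eventually (eventually_le_nhds (by rw [hXi]; linarith)))
    filter_upwards [hev] with n hn
    apply ae_of_all
    intro x
    rw [Real.norm_eq_abs, abs_mul, abs_of_nonneg (hstd x)]
    apply mul_le_mul_of_nonneg_left _ (hstd x)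
    refine le_trans (Jfun_bound d i hc _) ?_
    have hIMnn : 0 ≤ IM := integral_nonneg (Mb_nonneg d c)
    apply mul_le_mul_of_nonneg_left _ (mul_nonneg (inv_nonneg.mpr (Kd_pos d).le) hIMnn)
    apply pow_le_pow_left₀ (by positivity)
    have e1 : |xin n * x / Real.sqrt 2| = |xin n| * |x| / Real.sqrt 2 := by
      rw [abs_div, abs_mul, abs_of_nonneg (Real.sqrt_nonneg 2)]
    have e2 : Xi / Real.sqrt 2 * |x| = Xi * |x| / Real.sqrt 2 := by ring
    rw [e1, e2]
    have h2 : (0:ℝ) < Real.sqrt 2 := Real.sqrt_pos.mpr two_pos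
    have hle2 : |xin n| * |x| / Real.sqrt 2 ≤ Xi * |x| / Real.sqrt 2 := by
      gcongr
    linarith
  · have key : Integrable (fun x : ℝ =>
        (1 + (Xi / Real.sqrt 2) * |x|)^d * Real.exp (-(1/2 : ℝ) * x^2)) :=
      int_one_add_mul_abs_pow_gauss d (by positivity) (by norm_num)
    apply Integrable.restrict
    apply (key.const_mul (((Kd d)⁻¹ * IM) * (Real.sqrt (2*π))⁻¹)).congr
    apply ae_of_all
    intro x
    show (Kd d)⁻¹ * IM * (Real.sqrt (2*π))⁻¹ *
        ((1 + Xi / Real.sqrt 2 * |x|)^d * Real.exp (-(1/2 : ℝ) * x^2))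
      = stdPhi x * ((Kd d)⁻¹ * IM * (1 + Xi / Real.sqrt 2 * |x|)^d)
    unfold stdPhi
    rw [show Real.exp (-(1/2 : ℝ) * x^2) = Real.exp (-x^2/2) from congrArg Real.exp (by ring)]
    ring
  · apply ae_of_all
    intro x
    apply Tendsto.const_mul
    exact ((Jfun_continuous d i hc).tendsto _).comp ((hxi.mul_const x).div_const _)
end Analysis


section Iter
variable {κ : ℝ → ℝ}

lemma iter_contDiff (h : ContDiff ℝ 2 κ) (L : ℕ) : ContDiff ℝ 2 (κ^[L]) := by
  induction L with
  | zero => simpa using contDiff_id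
  | succ n ih => rw [Function.iterate_succ']; exact h.comp ih

lemma cd_diff1 {g : ℝ → ℝ} (h : ContDiff ℝ 2 g) : Differentiable ℝ g :=
  h.differentiable two_ne_zero

lemma cd_diff2 {g : ℝ → ℝ} (h : ContDiff ℝ 2 g) : Differentiable ℝ (deriv g) := by
  have h2 : (2 : WithTop ℕ∞) = 1 + 1 := by norm_num
  rw [h2] at h
  exact ((contDiff_succ_iff_deriv.mp h).2.2).differentiable one_ne_zero

lemma deriv_iter (h : ContDiff ℝ 2 κ) (hfix : κ 1 = 1) (L : ℕ) :
    deriv (κ^[L]) 1 = (deriv κ 1) ^ L := by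
  induction L with
  | zero => simp
  | succ n ih =>
    rw [Function.iterate_succ']
    rw [deriv_comp 1 ((cd_diff1 h) _) ((cd_diff1 (iter_contDiff h n)) _),
      Function.iterate_fixed hfix, ih, pow_succ]
    ring

lemma deriv2_iter (h : ContDiff ℝ 2 κ) (hfix : κ 1 = 1)
    (hm0 : deriv κ 1 ≠ 0) (hm1 : deriv κ 1 - 1 ≠ 0) (L : ℕ) :
    deriv (deriv (κ^[L])) 1 =
      deriv (deriv κ) 1 * ((deriv κ 1) ^ (2 * L) - (deriv κ 1) ^ L) /
        (deriv κ 1 * (deriv κ 1 - 1)) := by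
  induction L with
  | zero => simp
  | succ n ih =>
    have hκ1 : Differentiable ℝ κ := cd_diff1 h
    have hκ2 : Differentiable ℝ (deriv κ) := cd_diff2 h
    have hg1 : Differentiable ℝ (κ^[n]) := cd_diff1 (iter_contDiff h n)
    have hg2 : Differentiable ℝ (deriv (κ^[n])) := cd_diff2 (iter_contDiff h n)
    rw [Function.iterate_succ']
    have hfun : deriv (κ ∘ κ^[n]) = fun x => (deriv κ ∘ κ^[n]) x * deriv (κ^[n]) x :=
      funext fun x => deriv_comp x (hκ1 _) (hg1 _)
    rw [hfun]
    rw [deriv_fun_mul ((hκ2 _).comp 1 (hg1 1)) (hg2 1)]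
    rw [deriv_comp 1 (hκ2 _) (hg1 1), Function.comp_apply,
      Function.iterate_fixed hfix, ih, deriv_iter h hfix]
    field_simp
    ring
end Iter

/-- High-disorder regime of Theorem 3.3: if `κ'(1) > 1`, with
`ξ_∞ := κ'(1)(κ'(1)−1)/κ''(1)`, then `κ'(1)^{−Ld/2}·N_i(L,u)` converges to
`(2√π/Γ((d+1)/2))·(η_1(κ'(1)−1))^{−d/2}·∫_u^∞ φ(x)(∫ Π(λ_{ξ_∞,x})·𝟙_{O_i}(λ_{ξ_∞,x})·
f_{(1+η_1(1−κ'(1)))/2}(λ) dλ) dx`. -/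
theorem statement5 (d i : ℕ) (hd : 2 ≤ d) (hi : i ≤ d) (u : ℝ) (κ : ℝ → ℝ)
    (hsmooth : ContDiff ℝ 2 κ) (hfix : κ 1 = 1)
    (hpos1 : 0 < deriv κ 1) (hpos2 : 0 < deriv (deriv κ) 1)
    (hjensen : deriv κ 1 * (deriv κ 1 - 1) ≤ deriv (deriv κ) 1)
    (hhigh : 1 < deriv κ 1) :
    Tendsto (fun L : ℕ => deriv κ 1 ^ (-((L : ℝ) * d) / 2) * Ncrit d i κ u L) atTop
      (nhds (2 * Real.sqrt π / Real.Gamma (((d : ℝ) + 1) / 2) *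
        (deriv κ 1 / deriv (deriv κ) 1 * (deriv κ 1 - 1)) ^ (-(d : ℝ) / 2) *
        GOIintShift d i ((1 + deriv κ 1 / deriv (deriv κ) 1 * (1 - deriv κ 1)) / 2)
          (deriv κ 1 * (deriv κ 1 - 1) / deriv (deriv κ) 1) u)) := by
  set m := deriv κ 1 with hm
  set w := deriv (deriv κ) 1 with hw
  have hm0 : m ≠ 0 := ne_of_gt hpos1
  have hm1' : m - 1 ≠ 0 := sub_ne_zero.mpr (ne_of_gt hhigh)
  have hw0 : w ≠ 0 := ne_of_gt hpos2
  set Xinf : ℝ := m * (m - 1) / w with hXi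
  have hXipos : 0 < Xinf := div_pos (mul_pos hpos1 (by linarith)) hpos2
  set c0 : ℝ := (1 - Xinf) / 2 with hc0
  have hc0nn : 0 ≤ c0 := by
    have h1 : Xinf ≤ 1 := (div_le_one hpos2).mpr hjensen
    rw [hc0]; linarith
  have hder : ∀ L, deriv (κ^[L]) 1 = m ^ L := deriv_iter hsmooth hfix
  have hder2 : ∀ L, deriv (deriv (κ^[L])) 1 = w * (m^(2*L) - m^L) / (m*(m-1)) :=
    deriv2_iter hsmooth hfix hm0 hm1'
  have hkey : ∀ L : ℕ, 1 ≤ L →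
      etaL κ L = Xinf * (m^L - 1)⁻¹ ∧ xiL κ L = Xinf * (1 + (m^L - 1)⁻¹) := by
    intro L hL
    have hpow1 : (1:ℝ) < m ^ L := one_lt_pow₀ hhigh (by omega)
    have hp0 : m ^ L - 1 ≠ 0 := ne_of_gt (by linarith)
    have hmL0 : m ^ L ≠ 0 := pow_ne_zero _ hm0
    have hfac : m^(2*L) - m^L = m^L * (m^L - 1) := by rw [two_mul, pow_add]; ring
    constructor
    · rw [etaL, hder, hder2, hfac, hXi]
      field_simp
    · rw [xiL, hder, hder2, hfac, hXi]
      field_simp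
      ring
  have hcarg : ∀ L : ℕ, 1 ≤ L → (1 + etaL κ L - xiL κ L) / 2 = c0 := by
    intro L hL
    obtain ⟨h1, h2⟩ := hkey L hL
    rw [h1, h2, hc0]; ring
  have hA : Tendsto (fun L : ℕ => (m^L - 1)⁻¹) atTop (nhds 0) := by
    apply Tendsto.inv_tendsto_atTop
    have : Tendsto (fun L : ℕ => m ^ L) atTop atTop :=
      tendsto_pow_atTop_atTop_of_one_lt hhigh
    simpa [sub_eq_add_neg] using tendsto_atTop_add_const_right atTop (-1 : ℝ) this
  have hxiL : Tendsto (fun L : ℕ => Xinf * (1 + (m^L - 1)⁻¹)) atTop (nhds Xinf) := by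
    have h := (tendsto_const_nhds (x := (1:ℝ)) (f := atTop (α := ℕ))).add hA
    have h2 := h.const_mul Xinf
    simpa using h2
  have houter := outer_tendsto d i hc0nn u hxiL
  have hrpow : Tendsto (fun L : ℕ => (Xinf * (1 + (m^L - 1)⁻¹)) ^ (-(d:ℝ)/2)) atTop
      (nhds (Xinf ^ (-(d:ℝ)/2))) :=
    ((Real.continuousAt_rpow_const Xinf _ (Or.inl (ne_of_gt hXipos))).tendsto).comp hxiL
  have hmain : Tendsto (fun L : ℕ =>
      2 * Real.sqrt π / Real.Gamma (((d:ℝ)+1)/2) *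
        ((Xinf * (1 + (m^L - 1)⁻¹)) ^ (-(d:ℝ)/2)) *
        GOIintShift d i c0 (Xinf * (1 + (m^L - 1)⁻¹)) u) atTop
      (nhds (2 * Real.sqrt π / Real.Gamma (((d:ℝ)+1)/2) * Xinf ^ (-(d:ℝ)/2) *
        GOIintShift d i c0 Xinf u)) :=
    (tendsto_const_nhds.mul hrpow).mul houter
  have htarget : 2 * Real.sqrt π / Real.Gamma (((d:ℝ)+1)/2) *
        (m / w * (m - 1)) ^ (-(d:ℝ)/2) *
        GOIintShift d i ((1 + m / w * (1 - m)) / 2) (m * (m - 1) / w) u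
      = 2 * Real.sqrt π / Real.Gamma (((d:ℝ)+1)/2) * Xinf ^ (-(d:ℝ)/2) *
        GOIintShift d i c0 Xinf u := by
    rw [show m / w * (m-1) = Xinf from by rw [hXi]; ring,
        show (1 + m / w * (1 - m)) / 2 = c0 from by rw [hc0, hXi]; ring]
  rw [htarget]
  apply Tendsto.congr' _ hmain
  filter_upwards [eventually_ge_atTop 1] with L hL
  obtain ⟨h1, h2⟩ := hkey L hL
  have hpow1 : (1:ℝ) < m ^ L := one_lt_pow₀ hhigh (by omega)
  have hstep : m ^ (-((L:ℝ) * (d:ℝ))/2) * (etaL κ L) ^ (-(d:ℝ)/2)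
      = (Xinf * (1 + (m^L - 1)⁻¹)) ^ (-(d:ℝ)/2) := by
    have he : m ^ (-((L:ℝ) * (d:ℝ))/2) = ((m^L : ℝ)) ^ (-(d:ℝ)/2) := by
      rw [show -((L:ℝ)*(d:ℝ))/2 = (L:ℝ) * (-(d:ℝ)/2) from by ring,
        Real.rpow_mul hpos1.le, Real.rpow_natCast]
    rw [he, h1, ← Real.mul_rpow (pow_nonneg hpos1.le L)
      (mul_nonneg hXipos.le (inv_nonneg.mpr (by linarith)))]
    congr 1
    have hp0 : m ^ L - 1 ≠ 0 := ne_of_gt (by linarith)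
    field_simp
    ring
  rw [Ncrit, hcarg L hL, h2, ← hstep]
  ring
end

section
/- Let κ : ℝ → ℝ be twice continuously differentiable with κ(1) = 1, κ'(1) > 0 and κ''(1) > 0, and for L ≥ 1 let κ_L denote the L-fold iterate κ∘⋯∘κ. Then κ_L''(1) > 0 for every L ≥ 1, and the quantity γ_L := (κ_L'(1)² − κ_L'(1))/κ_L''(1) does not depend on L: for every L ≥ 1, γ_L = (κ'(1)² − κ'(1))/κ''(1). (Invariance of the spectral parameter γ_L used to verify the hypothesis of the Kac–Rice Theorem 4.4 of Cheng–Schwartzman.) -/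
/-- Invariance of the spectral parameter `γ_L := (κ_L'(1)² − κ_L'(1))/κ_L''(1)`:
`κ_L''(1) > 0` for every `L ≥ 1` and `γ_L = (κ'(1)² − κ'(1))/κ''(1)` for every `L ≥ 1`. -/
theorem statement13 (κ : ℝ → ℝ) (hκ : ContDiff ℝ 2 κ) (hfix : κ 1 = 1)
    (h1 : 0 < deriv κ 1) (h2 : 0 < deriv (deriv κ) 1) :
    ∀ L : ℕ, 1 ≤ L →
      0 < deriv (deriv (κ^[L])) 1 ∧
      (deriv (κ^[L]) 1 ^ 2 - deriv (κ^[L]) 1) / deriv (deriv (κ^[L])) 1 =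
        (deriv κ 1 ^ 2 - deriv κ 1) / deriv (deriv κ) 1 := by
  set a := deriv κ 1 with ha
  set b := deriv (deriv κ) 1 with hb
  have hκd : Differentiable ℝ κ := hκ.differentiable two_ne_zero
  have hκ' : ContDiff ℝ 1 (deriv κ) := by
    have h : ContDiff ℝ ((1:WithTop ℕ∞) + 1) κ := by
      rw [show ((1:WithTop ℕ∞) + 1) = 2 by norm_num]; exact hκ
    exact (contDiff_succ_iff_deriv.mp h).2.2
  have hκ'd : Differentiable ℝ (deriv κ) := hκ'.differentiable one_ne_zero
  have hit : ∀ L, ContDiff ℝ 2 (κ^[L]) := by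
    intro L
    induction L with
    | zero => simpa using contDiff_id
    | succ n ih => rw [Function.iterate_succ']; exact hκ.comp ih
  have hfixL : ∀ L, κ^[L] 1 = 1 := fun L => Function.iterate_fixed hfix L
  have hd1 : ∀ L, deriv (κ^[L]) 1 = a ^ L := by
    intro L
    induction L with
    | zero => simp
    | succ n ih =>
      rw [Function.iterate_succ']
      rw [deriv_comp _ hκd.differentiableAt
        (((hit n).differentiable two_ne_zero).differentiableAt)]
      rw [hfixL n, ih, ← ha, pow_succ]; ring
  have hd2 : ∀ L, deriv (deriv (κ^[L])) 1
      = b * a ^ (L - 1) * (∑ i ∈ Finset.range L, a ^ i) := by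
    intro L
    induction L with
    | zero => simp
    | succ n ih =>
      have hgd : Differentiable ℝ (κ^[n]) := (hit n).differentiable two_ne_zero
      have hg' : ContDiff ℝ 1 (deriv (κ^[n])) := by
        have h : ContDiff ℝ ((1:WithTop ℕ∞) + 1) (κ^[n]) := by
          rw [show ((1:WithTop ℕ∞) + 1) = 2 by norm_num]; exact hit n
        exact (contDiff_succ_iff_deriv.mp h).2.2
      have hg'd : Differentiable ℝ (deriv (κ^[n])) := hg'.differentiable one_ne_zero
      rw [Function.iterate_succ']
      have heq : deriv (κ ∘ κ^[n]) = fun x => (deriv κ ∘ κ^[n]) x * deriv (κ^[n]) x := by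
        funext x; exact deriv_comp x hκd.differentiableAt hgd.differentiableAt
      rw [heq, deriv_fun_mul (((hκ'd.comp hgd).differentiableAt)) hg'd.differentiableAt,
        deriv_comp _ hκ'd.differentiableAt hgd.differentiableAt]
      simp only [Function.comp_apply]
      rw [hfixL n, hd1 n, ih, ← ha, ← hb]
      cases n with
      | zero => simp
      | succ m =>
        simp only [Nat.add_sub_cancel, Finset.sum_range_succ]
        ring
  intro L hL
  obtain ⟨m, rfl⟩ : ∃ m, L = m + 1 := ⟨L - 1, (Nat.succ_pred_eq_of_pos hL).symm⟩
  have hS : (0:ℝ) < ∑ i ∈ Finset.range (m + 1), a ^ i :=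
    Finset.sum_pos (fun i _ => pow_pos h1 i) Finset.nonempty_range_add_one
  have hpos : 0 < deriv (deriv (κ^[m+1])) 1 := by
    rw [hd2]
    exact mul_pos (mul_pos h2 (pow_pos h1 _)) hS
  refine ⟨hpos, ?_⟩
  rw [hd1, hd2]
  have hgeo : (∑ i ∈ Finset.range (m+1), a ^ i) * (a - 1) = a ^ (m+1) - 1 := geom_sum_mul a (m+1)
  have hnum : (a ^ (m+1)) ^ 2 - a ^ (m+1)
      = (a * (a - 1)) * (a ^ (m+1-1) * ∑ i ∈ Finset.range (m+1), a ^ i) := by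
    have : (a ^ (m+1)) ^ 2 - a ^ (m+1) = a ^ (m+1) * (a ^ (m+1) - 1) := by ring
    rw [this, ← hgeo]
    simp only [Nat.add_sub_cancel, pow_succ]
    ring
  rw [hnum]
  have hne : a ^ (m+1-1) * ∑ i ∈ Finset.range (m+1), a ^ i ≠ 0 :=
    (mul_pos (pow_pos h1 _) hS).ne'
  have : b * a ^ (m+1-1) * (∑ i ∈ Finset.range (m+1), a ^ i)
      = b * (a ^ (m+1-1) * ∑ i ∈ Finset.range (m+1), a ^ i) := by ring
  rw [this, mul_div_mul_right _ _ hne]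
  congr 1
  ring
end

section
/- Let κ : ℝ → ℝ be twice continuously differentiable with κ(1) = 1, κ'(1) > 0 and κ''(1) > 0; for L ≥ 1 let κ_L denote the L-fold iterate κ∘⋯∘κ and set η_L := κ_L'(1)/κ_L''(1) and η_1 := κ'(1)/κ''(1). Then: (i) if κ'(1) < 1, then η_L → η_1·(1−κ'(1)) as L → ∞; (ii) if κ'(1) = 1, then η_L = η_1/L for every L ≥ 1; (iii) if κ'(1) > 1, then (κ'(1))^L·η_L → η_1·(κ'(1)−1) as L → ∞. (Three-regime asymptotics of η_L in the proof of Theorem 3.2.) -/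
open Filter

/-- Three-regime asymptotics of `η_L`:
(i) if `κ'(1) < 1`, `η_L → η_1·(1−κ'(1))`;
(ii) if `κ'(1) = 1`, `η_L = η_1/L` for every `L ≥ 1`;
(iii) if `κ'(1) > 1`, `(κ'(1))^L·η_L → η_1·(κ'(1)−1)`. -/
theorem statement14 (κ : ℝ → ℝ) (hκ : ContDiff ℝ 2 κ) (hfix : κ 1 = 1)
    (h1 : 0 < deriv κ 1) (h2 : 0 < deriv (deriv κ) 1) :
    (deriv κ 1 < 1 → Tendsto (fun L : ℕ => etaL κ L) atTop
      (nhds (deriv κ 1 / deriv (deriv κ) 1 * (1 - deriv κ 1)))) ∧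
    (deriv κ 1 = 1 → ∀ L : ℕ, 1 ≤ L →
      etaL κ L = (deriv κ 1 / deriv (deriv κ) 1) / L) ∧
    (1 < deriv κ 1 → Tendsto (fun L : ℕ => deriv κ 1 ^ L * etaL κ L) atTop
      (nhds (deriv κ 1 / deriv (deriv κ) 1 * (deriv κ 1 - 1)))) := by
  set a := deriv κ 1 with ha
  set b := deriv (deriv κ) 1 with hb
  have ha0 : a ≠ 0 := ne_of_gt h1
  have hb0 : b ≠ 0 := ne_of_gt h2
  have hκ' : ContDiff ℝ 1 (deriv κ) := by
    have h : ContDiff ℝ ((1 : ℕ) + 1) κ := by exact_mod_cast hκ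
    exact (contDiff_succ_iff_deriv.mp (by exact_mod_cast h)).2.2
  have hdκ : Differentiable ℝ κ := hκ.differentiable (by norm_num)
  have hdκ' : Differentiable ℝ (deriv κ) := hκ'.differentiable (by norm_num)
  have hitC : ∀ L : ℕ, ContDiff ℝ 2 (κ^[L]) := by
    intro L
    induction L with
    | zero => simpa using contDiff_id
    | succ n ih => rw [Function.iterate_succ']; exact hκ.comp ih
  have hdit : ∀ L : ℕ, Differentiable ℝ (κ^[L]) := fun L =>
    (hitC L).differentiable (by norm_num)
  have hitC' : ∀ L : ℕ, ContDiff ℝ 1 (deriv (κ^[L])) := by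
    intro L
    have h : ContDiff ℝ ((1 : ℕ) + 1) (κ^[L]) := by exact_mod_cast hitC L
    exact (contDiff_succ_iff_deriv.mp (by exact_mod_cast h)).2.2
  have hdit' : ∀ L : ℕ, Differentiable ℝ (deriv (κ^[L])) := fun L =>
    (hitC' L).differentiable (by norm_num)
  have hfixL : ∀ L : ℕ, κ^[L] 1 = 1 := fun L => Function.iterate_fixed hfix L
  have hd1 : ∀ L : ℕ, deriv (κ^[L]) 1 = a ^ L := by
    intro L
    induction L with
    | zero => simp
    | succ n ih =>
        rw [Function.iterate_succ', deriv_comp 1 (hdκ _) ((hdit n) 1), hfixL n, ih]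
        ring
  have hfun : ∀ L : ℕ, deriv (κ^[L + 1]) =
      fun x => deriv κ (κ^[L] x) * deriv (κ^[L]) x := by
    intro L
    funext x
    rw [Function.iterate_succ', deriv_comp x (hdκ _) ((hdit L) x)]
  have hd2 : ∀ L : ℕ, a * deriv (deriv (κ^[L])) 1
      = b * a ^ L * ∑ i ∈ Finset.range L, a ^ i := by
    intro L
    induction L with
    | zero => simp
    | succ n ih =>
        rw [hfun n]
        have hc : DifferentiableAt ℝ (fun x => deriv κ (κ^[n] x)) 1 :=
          (hdκ' _).comp 1 ((hdit n) 1)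
        have hcd : deriv (fun x => deriv κ (κ^[n] x)) 1 = b * a ^ n := by
          show deriv (deriv κ ∘ κ^[n]) 1 = b * a ^ n
          rw [deriv_comp 1 (hdκ' (κ^[n] 1)) ((hdit n) 1), hfixL n, hd1 n, ← hb]
        rw [deriv_fun_mul hc ((hdit' n) 1), hcd, hd1 n, hfixL n, ← ha,
          Finset.sum_range_succ]
        linear_combination a * ih
  have hEta : ∀ L : ℕ, etaL κ L = a / (b * ∑ i ∈ Finset.range L, a ^ i) := by
    intro L
    set S := ∑ i ∈ Finset.range L, a ^ i with hS
    have hB := hd2 L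
    rw [← hS] at hB
    rw [etaL, hd1 L]
    by_cases hS0 : S = 0
    · have hB0 : deriv (deriv (κ^[L])) 1 = 0 := by
        have h : a * deriv (deriv (κ^[L])) 1 = 0 := by rw [hB, hS0]; ring
        exact (mul_eq_zero.mp h).resolve_left ha0
      rw [hB0, hS0, mul_zero, div_zero, div_zero]
    · have hBne : deriv (deriv (κ^[L])) 1 ≠ 0 := by
        intro h
        rw [h, mul_zero] at hB
        have hpow : b * a ^ L ≠ 0 := mul_ne_zero hb0 (pow_ne_zero _ ha0)
        exact hS0 ((mul_eq_zero.mp hB.symm).resolve_left hpow)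
      rw [div_eq_div_iff hBne (mul_ne_zero hb0 hS0)]
      linear_combination -hB
  refine ⟨?_, ?_, ?_⟩
  · intro ha1
    have hgeom : Tendsto (fun L : ℕ => ∑ i ∈ Finset.range L, a ^ i) atTop
        (nhds (1 - a)⁻¹) := (hasSum_geometric_of_lt_one h1.le ha1).tendsto_sum_nat
    have hlim : Tendsto (fun L : ℕ => a / (b * ∑ i ∈ Finset.range L, a ^ i)) atTop
        (nhds (a / (b * (1 - a)⁻¹))) := by
      apply Tendsto.div tendsto_const_nhds (tendsto_const_nhds.mul hgeom)
      exact mul_ne_zero hb0 (inv_ne_zero (by linarith))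
    have heq : a / (b * (1 - a)⁻¹) = a / b * (1 - a) := by
      field_simp
    rw [← heq]
    exact hlim.congr fun L => (hEta L).symm
  · intro ha1 L hL
    rw [hEta L, ha1]
    simp [Finset.sum_const]
    rw [div_eq_mul_inv, mul_comm]
  · intro ha1
    have ha1' : a ≠ 1 := ne_of_gt ha1
    have hainv : a⁻¹ < 1 := inv_lt_one_of_one_lt₀ ha1
    have hpow : Tendsto (fun L : ℕ => (a⁻¹) ^ L) atTop (nhds 0) :=
      tendsto_pow_atTop_nhds_zero_of_lt_one (inv_nonneg.mpr h1.le) hainv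
    have hlim : Tendsto (fun L : ℕ => a / b * (a - 1) * (1 - (a⁻¹) ^ L)⁻¹) atTop
        (nhds (a / b * (a - 1))) := by
      have h2' : Tendsto (fun L : ℕ => (1 - (a⁻¹) ^ L)⁻¹) atTop (nhds 1) := by
        have h := ((tendsto_const_nhds (x := (1:ℝ))).sub hpow).inv₀ (by norm_num)
        simpa using h
      simpa using (tendsto_const_nhds (x := a / b * (a - 1))).mul h2'
    apply hlim.congr'
    filter_upwards [eventually_ge_atTop 1] with L hL
    have hgs : ∑ i ∈ Finset.range L, a ^ i = (a ^ L - 1) / (a - 1) :=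
      geom_sum_eq ha1' L
    have hpowgt : (1:ℝ) < a ^ L := one_lt_pow₀ ha1 (by omega)
    have hne1 : a ^ L - 1 ≠ 0 := by linarith
    have hne2 : a - 1 ≠ 0 := by linarith
    have hpne : a ^ L ≠ 0 := pow_ne_zero _ ha0
    rw [hEta L, hgs, inv_pow]
    field_simp
end

section
/- Let κ : ℝ → ℝ be twice continuously differentiable with κ(1) = 1, κ'(1) > 0 and κ''(1) > 0; for L ≥ 1 let κ_L denote the L-fold iterate κ∘⋯∘κ and set ξ_L := κ_L'(1)²/κ_L''(1). Then: (i) if κ'(1) ≤ 1, then ξ_L → 0 as L → ∞; (ii) if κ'(1) > 1, then ξ_L → κ'(1)(κ'(1)−1)/κ''(1) as L → ∞. (Asymptotics of ξ_L in the proof of Theorem 3.3.) -/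
open Filter Finset

lemma aux_deriv_contDiff (κ : ℝ → ℝ) (hκ : ContDiff ℝ 2 κ) : ContDiff ℝ 1 (deriv κ) :=
  ((contDiff_succ_iff_deriv (n := 1) (f := κ)).mp (by norm_num; exact hκ)).2.2

lemma aux_iter_contDiff (κ : ℝ → ℝ) (hκ : ContDiff ℝ 2 κ) : ∀ L : ℕ, ContDiff ℝ 2 (κ^[L]) := by
  intro L
  induction L with
  | zero => simpa using contDiff_id
  | succ L ih => rw [Function.iterate_succ']; exact hκ.comp ih

lemma aux_iter_fix (κ : ℝ → ℝ) (hfix : κ 1 = 1) (L : ℕ) : κ^[L] 1 = 1 :=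
  Function.iterate_fixed hfix L

lemma aux_first_deriv (κ : ℝ → ℝ) (hκ : ContDiff ℝ 2 κ) (hfix : κ 1 = 1) :
    ∀ L : ℕ, deriv (κ^[L]) 1 = (deriv κ 1) ^ L := by
  intro L
  induction L with
  | zero => simp
  | succ L ih =>
    rw [Function.iterate_succ']
    rw [deriv_comp 1 (hκ.differentiable two_ne_zero _)
      ((aux_iter_contDiff κ hκ L).differentiable two_ne_zero 1)]
    rw [aux_iter_fix κ hfix, ih, pow_succ]
    ring

lemma aux_deriv_iter_eq (κ : ℝ → ℝ) (hκ : ContDiff ℝ 2 κ) (L : ℕ) :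
    deriv (κ^[L+1]) = fun x => deriv κ (κ^[L] x) * deriv (κ^[L]) x := by
  funext x
  rw [Function.iterate_succ']
  exact deriv_comp x (hκ.differentiable two_ne_zero _)
    ((aux_iter_contDiff κ hκ L).differentiable two_ne_zero x)

lemma aux_second_deriv (κ : ℝ → ℝ) (hκ : ContDiff ℝ 2 κ) (hfix : κ 1 = 1) :
    ∀ L : ℕ, deriv (deriv (κ^[L+1])) 1 =
    deriv (deriv κ) 1 * ∑ i ∈ range (L+1), (deriv κ 1) ^ (L + i) := by
  intro L
  induction L with
  | zero =>
    simp only [zero_add, Function.iterate_one, range_one, sum_singleton, pow_zero, mul_one]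
  | succ L ih =>
    rw [aux_deriv_iter_eq κ hκ (L+1)]
    have hd1 : DifferentiableAt ℝ (fun x => deriv κ (κ^[L+1] x)) 1 :=
      ((aux_deriv_contDiff κ hκ).differentiable one_ne_zero _).comp 1
        ((aux_iter_contDiff κ hκ (L+1)).differentiable two_ne_zero 1)
    have hd2 : DifferentiableAt ℝ (deriv (κ^[L+1])) 1 := by
      have := (contDiff_succ_iff_deriv (n := 1) (f := κ^[L+1])).mp
        (by norm_num; exact aux_iter_contDiff κ hκ (L+1))
      exact (this.2.2.differentiable one_ne_zero) 1
    rw [deriv_fun_mul hd1 hd2]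
    have hcomp : deriv (fun x => deriv κ (κ^[L+1] x)) 1 =
        deriv (deriv κ) 1 * (deriv κ 1) ^ (L+1) := by
      rw [show (fun x => deriv κ (κ^[L+1] x)) = deriv κ ∘ κ^[L+1] from rfl]
      rw [deriv_comp 1 ((aux_deriv_contDiff κ hκ).differentiable one_ne_zero _)
        ((aux_iter_contDiff κ hκ (L+1)).differentiable two_ne_zero 1)]
      rw [aux_iter_fix κ hfix, aux_first_deriv κ hκ hfix]
    rw [hcomp, ih, aux_iter_fix κ hfix, aux_first_deriv κ hκ hfix]
    set a := deriv κ 1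
    have hs : ∑ i ∈ range (L+1), a ^ (L+1+i) = a * ∑ i ∈ range (L+1), a ^ (L+i) := by
      rw [Finset.mul_sum]
      refine Finset.sum_congr rfl fun i _ => ?_
      rw [show L+1+i = (L+i)+1 by ring, pow_succ]
      ring
    conv_rhs => rw [Finset.sum_range_succ]
    rw [hs, pow_add]
    ring

lemma xiL_succ (κ : ℝ → ℝ) (hκ : ContDiff ℝ 2 κ) (hfix : κ 1 = 1) (L : ℕ) :
    xiL κ (L+1) = (deriv κ 1) ^ (2*(L+1)) /
      (deriv (deriv κ) 1 * ∑ i ∈ range (L+1), (deriv κ 1) ^ (L + i)) := by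
  rw [xiL, aux_first_deriv κ hκ hfix, aux_second_deriv κ hκ hfix, ← pow_mul]
  ring_nf

/-- Asymptotics of `ξ_L`: (i) if `κ'(1) ≤ 1` then `ξ_L → 0`;
(ii) if `κ'(1) > 1` then `ξ_L → κ'(1)(κ'(1)−1)/κ''(1)`. -/
theorem statement15 (κ : ℝ → ℝ) (hκ : ContDiff ℝ 2 κ) (hfix : κ 1 = 1)
    (h1 : 0 < deriv κ 1) (h2 : 0 < deriv (deriv κ) 1) :
    (deriv κ 1 ≤ 1 → Tendsto (fun L : ℕ => xiL κ L) atTop (nhds 0)) ∧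
    (1 < deriv κ 1 → Tendsto (fun L : ℕ => xiL κ L) atTop
      (nhds (deriv κ 1 * (deriv κ 1 - 1) / deriv (deriv κ) 1))) := by
  set a := deriv κ 1 with ha
  set b := deriv (deriv κ) 1 with hb
  have hb0 : b ≠ 0 := ne_of_gt h2
  have ha0 : a ≠ 0 := ne_of_gt h1
  constructor
  · intro hle
    rw [← tendsto_add_atTop_iff_nat 1]
    rcases eq_or_lt_of_le hle with heq | hlt
    · -- a = 1
      have hxi : ∀ L : ℕ, xiL κ (L+1) = 1 / (b * (L+1)) := by
        intro L
        rw [xiL_succ κ hκ hfix, ← ha, ← hb, heq]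
        simp
      simp only [hxi]
      have : Tendsto (fun L : ℕ => (b * (L+1) : ℝ)) atTop atTop := by
        apply Tendsto.const_mul_atTop h2
        exact tendsto_atTop_add_const_right atTop 1 tendsto_natCast_atTop_atTop
      have h0 := this.inv_tendsto_atTop
      simp only [one_div]
      exact h0
    · -- a < 1
      have hxi : ∀ L : ℕ, xiL κ (L+1) = a^(L+2) * (a-1) / (b * (a^(L+1) - 1)) := by
        intro L
        rw [xiL_succ κ hκ hfix, ← ha, ← hb]
        have hgeom : ∑ i ∈ range (L+1), a ^ (L + i) = a^L * ((a^(L+1) - 1)/(a-1)) := by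
          have h' : ∀ i ∈ range (L+1), a ^ (L + i) = a^L * a^i := by
            intro i _; rw [pow_add]
          rw [Finset.sum_congr rfl h', ← Finset.mul_sum, geom_sum_eq (ne_of_lt hlt)]
        rw [hgeom]
        have hne : a^(L+1) - 1 ≠ 0 := by
          have : a^(L+1) < 1 := pow_lt_one₀ h1.le hlt (by omega)
          linarith
        have hne2 : a - 1 ≠ 0 := by linarith
        field_simp
        ring
      simp only [hxi]
      have hpow : Tendsto (fun L : ℕ => (a : ℝ)^(L+1)) atTop (nhds 0) :=
        (tendsto_add_atTop_iff_nat 1).mpr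
          (tendsto_pow_atTop_nhds_zero_of_lt_one h1.le hlt)
      have hpow2 : Tendsto (fun L : ℕ => (a : ℝ)^(L+2)) atTop (nhds 0) :=
        (tendsto_add_atTop_iff_nat 2).mpr
          (tendsto_pow_atTop_nhds_zero_of_lt_one h1.le hlt)
      have hnum : Tendsto (fun L : ℕ => a^(L+2) * (a-1)) atTop (nhds (0 * (a-1))) :=
        hpow2.mul_const _
      have hden : Tendsto (fun L : ℕ => b * (a^(L+1) - 1)) atTop (nhds (b * (0 - 1))) :=
        ((hpow.sub_const 1).const_mul b)
      have := hnum.div hden (by simpa using hb0)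
      simpa [Pi.div_def] using this
  · intro hgt
    rw [← tendsto_add_atTop_iff_nat 1]
    have hxi : ∀ L : ℕ, xiL κ (L+1) = a * (a-1) / (b * (1 - (a⁻¹)^(L+1))) := by
      intro L
      rw [xiL_succ κ hκ hfix, ← ha, ← hb]
      have hgeom : ∑ i ∈ range (L+1), a ^ (L + i) = a^L * ((a^(L+1) - 1)/(a-1)) := by
        have h' : ∀ i ∈ range (L+1), a ^ (L + i) = a^L * a^i := by
          intro i _; rw [pow_add]
        rw [Finset.sum_congr rfl h', ← Finset.mul_sum, geom_sum_eq (ne_of_gt hgt)]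
      rw [hgeom]
      have hne : a^(L+1) - 1 ≠ 0 := by
        have : (1:ℝ) < a^(L+1) := one_lt_pow₀ hgt (Nat.succ_ne_zero L)
        linarith
      have hne2 : a - 1 ≠ 0 := by linarith
      have hne3 : 1 - (a⁻¹)^(L+1) ≠ 0 := by
        have h1' : (a⁻¹)^(L+1) < 1 :=
          pow_lt_one₀ (by positivity) (by rw [inv_lt_one_iff₀]; right; exact hgt)
            (Nat.succ_ne_zero L)
        linarith
      have hden1 : b * (a ^ L * ((a ^ (L+1) - 1) / (a - 1))) ≠ 0 := by
        apply mul_ne_zero hb0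
        apply mul_ne_zero (pow_ne_zero _ ha0)
        exact div_ne_zero hne hne2
      rw [div_eq_div_iff hden1 (mul_ne_zero hb0 hne3)]
      rw [inv_pow]
      field_simp
      ring
    simp only [hxi]
    have hpow : Tendsto (fun L : ℕ => ((a:ℝ)⁻¹)^(L+1)) atTop (nhds 0) := by
      have hlt : a⁻¹ < 1 := by rw [inv_lt_one_iff₀]; right; exact hgt
      exact (tendsto_add_atTop_iff_nat 1).mpr
        (tendsto_pow_atTop_nhds_zero_of_lt_one (by positivity) hlt)
    have hden : Tendsto (fun L : ℕ => b * (1 - (a⁻¹)^(L+1))) atTop (nhds (b * (1 - 0))) :=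
      ((tendsto_const_nhds.sub hpow).const_mul b)
    have := (tendsto_const_nhds (x := a * (a-1)) (f := atTop)).div hden (by simpa using hb0)
    simpa [Pi.div_def] using this
end
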